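/- Let E be a real inner product space (e.g. EuclideanSpace ℝ (Fin d)), let w ∈ E with w ≠ 0, let α > 0, and let z ∈ E. Suppose x ∈ E maximizes the utility u(y) = (1 if ⟪y, w⟫ ≥ α·‖w‖ else 0) − ‖y − z‖/α over all y ∈ E. Then either x = z, or ⟪z, w⟫ < α·‖w‖ and x = z + ((α − ⟪z, w⟫/‖w‖)/‖w‖) • w; in the latter case ⟪x, w⟫ = α·‖w‖, x − z is a nonnegative multiple of w, and ‖x − z‖ = α − ⟪z, w⟫/‖w‖ ≤ α. -/

import Mathlib

open RealInnerProductSpace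

theorem strategic_best_response_characterization
    {E : Type*} [NormedAddCommGroup E] [InnerProductSpace ℝ E]
    (w : E) (hw : w ≠ 0) (α : ℝ) (hα : 0 < α) (z x : E)
    (hmax : ∀ y : E,
      ((if ⟪y, w⟫ ≥ α * ‖w‖ then (1 : ℝ) else 0) - ‖y - z‖ / α) ≤
        ((if ⟪x, w⟫ ≥ α * ‖w‖ then (1 : ℝ) else 0) - ‖x - z‖ / α)) :
    x = z ∨
      (⟪z, w⟫ < α * ‖w‖ ∧
        x = z + ((α - ⟪z, w⟫ / ‖w‖) / ‖w‖) • w ∧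
        ⟪x, w⟫ = α * ‖w‖ ∧
        (∃ c : ℝ, 0 ≤ c ∧ x - z = c • w) ∧
        ‖x - z‖ = α - ⟪z, w⟫ / ‖w‖ ∧
        α - ⟪z, w⟫ / ‖w‖ ≤ α) := by
  have hw' : (0:ℝ) < ‖w‖ := norm_pos_iff.mpr hw
  have hnn : 0 ≤ ‖x - z‖ / α := div_nonneg (norm_nonneg _) hα.le
  have hzero : ‖x - z‖ / α ≤ 0 → x = z := by
    intro h2
    have h3 : ‖x - z‖ / α = 0 := le_antisymm h2 hnn
    have h4 : ‖x - z‖ = 0 := by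
      rcases div_eq_zero_iff.mp h3 with h | h
      · exact h
      · exact absurd h hα.ne'
    have := norm_eq_zero.mp h4
    rwa [sub_eq_zero] at this
  by_cases h1 : ⟪z, w⟫ ≥ α * ‖w‖
  · -- z is already classified positively: x = z
    left
    have hz := hmax z
    rw [if_pos h1] at hz
    simp only [sub_self, norm_zero, zero_div, sub_zero] at hz
    apply hzero
    by_cases hx : ⟪x, w⟫ ≥ α * ‖w‖
    · rw [if_pos hx] at hz; linarith
    · rw [if_neg hx] at hz; linarith
  · push_neg at h1
    have hβpos : 0 < α - ⟪z, w⟫ / ‖w‖ := by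
      have : ⟪z, w⟫ / ‖w‖ < α := (div_lt_iff₀ hw').mpr h1
      linarith
    set β : ℝ := α - ⟪z, w⟫ / ‖w‖ with hβ
    have hβw : β * ‖w‖ = α * ‖w‖ - ⟪z, w⟫ := by
      rw [hβ, sub_mul, div_mul_cancel₀ _ hw'.ne']
    have hkey : β / ‖w‖ * ‖w‖ ^ 2 = β * ‖w‖ := by
      rw [sq]; field_simp
    set p : E := z + (β / ‖w‖) • w with hp
    have hpw : ⟪p, w⟫ = α * ‖w‖ := by
      rw [hp, inner_add_left, real_inner_smul_left, real_inner_self_eq_norm_sq,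
        hkey]
      linarith
    have hup := hmax p
    rw [if_pos (le_of_eq hpw.symm)] at hup
    have hpz : ‖p - z‖ = β := by
      rw [hp, add_sub_cancel_left, norm_smul, norm_div, Real.norm_eq_abs,
        abs_of_pos hβpos, norm_norm, div_mul_cancel₀ _ hw'.ne']
    rw [hpz] at hup
    by_cases hx : ⟪x, w⟫ ≥ α * ‖w‖
    · right
      rw [if_pos hx] at hup
      have hle : ‖x - z‖ ≤ β := by
        have h5 : ‖x - z‖ / α ≤ β / α := by linarith
        exact (div_le_div_iff_of_pos_right hα).mp h5
      have hlow : β * ‖w‖ ≤ ⟪x - z, w⟫ := by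
        rw [inner_sub_left, hβw]; linarith
      have hcs : ⟪x - z, w⟫ ≤ ‖x - z‖ * ‖w‖ := real_inner_le_norm _ _
      have hnorm : ‖x - z‖ = β := le_antisymm hle (by nlinarith)
      have heq : ⟪x - z, w⟫ = ‖x - z‖ * ‖w‖ := by nlinarith
      have hsmul : ‖w‖ • (x - z) = ‖x - z‖ • w := inner_eq_norm_mul_iff_real.mp heq
      have hxz : x - z = (β / ‖w‖) • w := by
        have h6 : x - z = (‖x - z‖ / ‖w‖) • w := by
          rw [div_eq_inv_mul, mul_smul, ← hsmul, smul_smul, inv_mul_cancel₀ hw'.ne',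
            one_smul]
        rwa [hnorm] at h6
      have hxp : x = p := by
        rw [hp, ← hxz]; abel
      have hxw : ⟪x, w⟫ = α * ‖w‖ := by rw [hxp]; exact hpw
      have hβα : β ≤ α := by
        have hz0 := hmax z
        rw [if_neg (not_le.mpr h1), if_pos hx] at hz0
        simp only [sub_self, norm_zero, zero_div, sub_zero, zero_sub] at hz0
        have h7 : ‖x - z‖ / α ≤ 1 := by linarith
        have h8 := (div_le_one hα).mp h7
        rw [hnorm] at h8
        exact h8
      exact ⟨h1, hxp, hxw, ⟨β / ‖w‖, div_nonneg hβpos.le hw'.le, hxz⟩, hnorm, hβα⟩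
    · left
      rw [if_neg hx] at hup
      apply hzero
      have hz0 := hmax z
      rw [if_neg (not_le.mpr h1), if_neg hx] at hz0
      simp only [sub_self, norm_zero, zero_div, sub_zero, zero_sub] at hz0
      linarith
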